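/- For every a in the open interval (0, π/2), tan(a) > a + a³/3. -/

import Mathlib

open Real Set

/-- For every `a` in the open interval `(0, π/2)`, `tan a > a + a³/3`. -/
theorem tan_gt_add_cube_third :
    ∀ a ∈ Set.Ioo (0:ℝ) (π/2), Real.tan a > a + a^3/3 := by
  have hmono : StrictMonoOn (fun x : ℝ => Real.tan x - x - x^3/3) (Ico 0 (π/2)) := by
    apply strictMonoOn_of_deriv_pos (convex_Ico _ _)
    · apply ContinuousOn.sub (ContinuousOn.sub _ continuousOn_id)
      · exact (continuous_pow 3).continuousOn.div_const 3
      · intro x hx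
        apply (Real.continuousAt_tan.2 _).continuousWithinAt
        exact Real.cos_pos_of_mem_Ioo ⟨by linarith [hx.1, Real.pi_pos], hx.2⟩ |>.ne'
    · intro x hx
      rw [interior_Ico] at hx
      have hcos : Real.cos x ≠ 0 :=
        (Real.cos_pos_of_mem_Ioo ⟨by linarith [hx.1, Real.pi_pos], hx.2⟩).ne'
      have hd : HasDerivAt (fun x : ℝ => Real.tan x - x - x^3/3)
          (1 / Real.cos x ^ 2 - 1 - 3 * x^2 / 3) x := by
        exact ((Real.hasDerivAt_tan hcos).sub (hasDerivAt_id x)).sub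
          (((hasDerivAt_pow 3 x).div_const 3).congr_deriv (by ring))
      rw [hd.deriv]
      have htan : x < Real.tan x := Real.lt_tan hx.1 hx.2
      have h1 : 1 / Real.cos x ^ 2 = 1 + Real.tan x ^ 2 := by
        rw [Real.tan_eq_sin_div_cos]
        field_simp
        linarith [Real.sin_sq_add_cos_sq x]
      rw [h1]
      nlinarith [mul_pos (sub_pos.2 htan) (show (0:ℝ) < Real.tan x + x by linarith [hx.1])]
  intro a ha
  have := hmono (show (0:ℝ) ∈ Ico 0 (π/2) by constructor <;> [rfl; linarith [ha.1, ha.2]])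
    ⟨le_of_lt ha.1, ha.2⟩ ha.1
  simp only [Real.tan_zero] at this
  linarith
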